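/- For every k-colored permutation π of length n, Fomin's growth rules applied to the square diagram of π are well-defined and consistent: every corner of the n×n array receives a unique label in Z(k); along every horizontal or vertical edge of the array the two corner labels are either equal or form a cover relation in Z(k); and the sequences of labels read bottom-to-top up the right edge and left-to-right along the top edge are both saturated chains in Z(k) from the empty word ∅ to the same word of rank n (the label of the top-right corner). -/

import Mathlib

namespace KRF

/-- A letter of the alphabet `{1_1, …, 1_k, 2}`:  `one j` stands for the letter `1_j`
(with `1 ≤ j ≤ k` for genuine letters), and `two` stands for the letter `2`. -/
inductive Letter (k : ℕ) : Type where
  | one : ℕ → Letter k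
  | two : Letter k
deriving DecidableEq

/-- A word over the alphabet `{1_1, …, 1_k, 2}`, listed from the leftmost letter to the
rightmost letter. -/
abbrev Word (k : ℕ) := List (Letter k)

/-- The contribution of a letter to the rank: each `1_j` counts `1` and each `2` counts `2`. -/
def Letter.rank {k : ℕ} : Letter k → ℕ
  | .one _ => 1
  | .two => 2

/-- The rank of a word: the sum of its letters. -/
def Word.rank {k : ℕ} (w : Word k) : ℕ := (w.map Letter.rank).sum

/-- The letter `1_j` is valid when `1 ≤ j ≤ k`. -/
def Letter.Valid (k : ℕ) : Letter k → Prop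
  | .one j => 1 ≤ j ∧ j ≤ k
  | .two => True

/-- A genuine word of the Fibonacci poset `Z(k)`: all of its letters are valid. -/
def Word.Valid (k : ℕ) (w : Word k) : Prop := ∀ l ∈ w, l.Valid k

/-- The cover relation of the Fibonacci poset `Z(k)`:  `z` is covered by `w` iff `z` is
obtained from `w` either by changing a `2` into some `1_j` when all letters to the left of
that `2` are `2`'s, or by deleting the leftmost letter of the form `1_j`. -/
def ZCovers (k : ℕ) (z w : Word k) : Prop :=
  (∃ (p s : Word k) (j : ℕ), (∀ l ∈ p, l = Letter.two) ∧ 1 ≤ j ∧ j ≤ k ∧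
      w = p ++ Letter.two :: s ∧ z = p ++ Letter.one j :: s) ∨
  (∃ (p s : Word k) (j : ℕ), (∀ l ∈ p, l = Letter.two) ∧ 1 ≤ j ∧ j ≤ k ∧
      w = p ++ Letter.one j :: s ∧ z = p ++ s)

/-- `c 0 ⋖ c 1 ⋖ ⋯ ⋖ c n` is a saturated chain in `Z(k)` starting at the empty word. -/
def IsZChain (k n : ℕ) (c : ℕ → Word k) : Prop :=
  c 0 = [] ∧ ∀ i, i < n → ZCovers k (c i) (c (i + 1))

end KRF
namespace KRF

/-- A column of a (tiled and filled) `k`-ribbon Fibonacci tableau.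
`single h v` is a column of height 1 (shape letter `1_h`) tiled by one `k`-ribbon of
height `h` filled with the value `v`.
`double ht hb vt vb` is a column of height 2 (shape letter `2`) tiled by a `k`-ribbon of
height `ht` filled with `vt` stacked on top of a `k`-ribbon of height `hb` (always
`hb = k + 1 - ht` for genuine tableaux) filled with `vb`. -/
inductive Col (k : ℕ) : Type where
  | single : ℕ → ℕ → Col k
  | double : ℕ → ℕ → ℕ → ℕ → Col k
deriving DecidableEq

/-- A (tiled, filled) `k`-ribbon Fibonacci tableau: its list of columns, from the leftmost
column to the rightmost one. -/
abbrev Tab (k : ℕ) := List (Col k)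

/-- The shape letter of a column. -/
def Col.shape {k : ℕ} : Col k → Letter k
  | .single h _ => Letter.one h
  | .double _ _ _ _ => Letter.two

/-- The `k`-ribbon Fibonacci shape (a word) underlying a tableau. -/
def Tab.shape {k : ℕ} (T : Tab k) : Word k := T.map Col.shape

/-- The value in the bottom `k`-ribbon of a column. -/
def Col.bottomVal {k : ℕ} : Col k → ℕ
  | .single _ v => v
  | .double _ _ _ vb => vb

/-- The heights occurring in a column are genuine ribbon heights: between `1` and `k`,
and in a column of height 2 the two heights sum to `k + 1`. -/
def Col.HeightsValid (k : ℕ) : Col k → Prop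
  | .single h _ => 1 ≤ h ∧ h ≤ k
  | .double ht hb _ _ => 1 ≤ ht ∧ ht ≤ k ∧ hb = k + 1 - ht

/-- The list of all entries of a tableau (one for each `k`-ribbon). -/
def Tab.entries {k : ℕ} (T : Tab k) : List ℕ :=
  (T.map fun c => match c with
    | Col.single _ v => [v]
    | Col.double _ _ vt vb => [vt, vb]).flatten

/-- The list of the bottom-ribbon values of the columns of a tableau. -/
def Tab.bottoms {k : ℕ} (T : Tab k) : List ℕ := T.map Col.bottomVal

/-- `T` is a standard `k`-ribbon Fibonacci tableau with entries `1, …, n`: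
heights are valid, the entries are exactly `1, …, n`,  and the tableau can be built by
placing `n, n-1, …, 1` in order, each new `k`-ribbon being either appended (as a new
rightmost height-1 column) to the shape formed by the `k`-ribbons containing larger
entries, or stacked on top of a single such `k`-ribbon.  Equivalently (and this is how we
formalize it): the bottom entries strictly decrease from left to right (in particular the
`k`-ribbon containing the leftmost square of the bottom row contains `n`), and in each
column of height 2 the top entry is smaller than the bottom entry. -/
def IsStandardTab (k n : ℕ) (T : Tab k) : Prop :=
  (∀ c ∈ T, Col.HeightsValid k c) ∧
  (Tab.entries T).Perm (List.range' 1 n) ∧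
  List.Chain' (fun a b => b < a) (Tab.bottoms T) ∧
  (∀ c ∈ T, ∀ ht hb vt vb, c = Col.double ht hb vt vb → vt < vb)

/-- Updating a (partial) path tableau along one cover step `z ⋖ w` of `Z(k)`, placing the
value `i` in the `k` new squares of `w` relative to `z`:  if `w` is obtained from `z` by
inserting a letter `1_j` after the prefix of `2`'s, a new height-1 column with a single
ribbon of height `j` filled with `i` is created there; if `w` is obtained from `z` by
changing the letter `1_h` just after the prefix of `2`'s into a `2`, the `k` new squares
of that column form a `k`-ribbon of height `k + 1 - h` filled with `i`, stacked on top of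
the already present `k`-ribbon of height `h`. -/
def updateTab (k : ℕ) (i : ℕ) : Word k → Word k → Tab k → Tab k
  | Letter.two :: z', Letter.two :: w', c :: T => c :: updateTab k i z' w' T
  | Letter.one h :: _, Letter.two :: _, Col.single _ v :: T =>
      Col.double (k + 1 - h) h i v :: T
  | z, Letter.one j :: w', T => if z = w' then Col.single j i :: T else T
  | _, _, T => T

/-- The `k`-ribbon Fibonacci path tableau determined by a saturated chain in `Z(k)`:
for each `i = 1, …, n` the value `i` is placed in the `k` new squares of `c i` relative
to `c (i-1)`. -/
def chainTab (k : ℕ) (c : ℕ → Word k) : ℕ → Tab k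
  | 0 => []
  | m + 1 => updateTab k (m + 1) (c m) (c (m + 1)) (chainTab k c m)

/-- `T` is a `k`-ribbon Fibonacci path tableau with entries `1, …, n`: it is obtained
from some saturated chain `∅ = c 0 ⋖ c 1 ⋖ ⋯ ⋖ c n` in `Z(k)` by placing `i`'s in the
`k` new squares created at the `i`-th step. -/
def IsPathTab (k n : ℕ) (T : Tab k) : Prop :=
  ∃ c : ℕ → Word k, IsZChain k n c ∧ T = chainTab k c n

end KRF
namespace KRF

/-- A `k`-colored permutation of length `n`: a permutation `x_1 x_2 ⋯ x_n` of `{1, …, n}`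
(here `x_i = perm i + 1`, using `Fin n` positions and values) together with a color
`color i ∈ {1, …, k}` attached to each entry. -/
structure ColoredPerm (n k : ℕ) : Type where
  perm : Equiv.Perm (Fin n)
  color : Fin n → ℕ
  color_pos : ∀ i, 1 ≤ color i
  color_le : ∀ i, color i ≤ k

/-- Insertion of a value `x` of color `j` into a `k`-ribbon Fibonacci tableau: compare `x`
with the value `t` in the `k`-ribbon containing the leftmost square of the bottom row.
If the tableau is empty or `x > t`, a new leftmost height-1 column consisting of a single
`k`-ribbon of height `j` filled with `x` is created.  If `x < t`, a `k`-ribbon of height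
`j` filled with `x` is placed on top of the `k`-ribbon containing `t` (which is forced to
become a `k`-ribbon of height `k + 1 - j`); if a `k`-ribbon of height `l` filled with `b`
was already on top of the ribbon containing `t`, it is bumped out and the value `b` with
color `l` is inserted recursively into the tableau formed by the columns to the right. -/
def insertVal (k : ℕ) (x j : ℕ) : Tab k → Tab k
  | [] => [Col.single j x]
  | c :: rest =>
    if Col.bottomVal c < x then Col.single j x :: c :: rest
    else
      match c with
      | Col.single _ v => Col.double j (k + 1 - j) x v :: rest
      | Col.double ht _ vt vb => Col.double j (k + 1 - j) x vb :: insertVal k vt ht rest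

/-- The insertion tableau obtained after inserting the first `i` colored entries
`x_1^{j_1}, …, x_i^{j_i}` of the `k`-colored permutation `π` into the empty tableau. -/
def PPartial (k n : ℕ) (π : ColoredPerm n k) (i : ℕ) : Tab k :=
  ((List.finRange n).take i).foldl
    (fun T m => insertVal k ((π.perm m : ℕ) + 1) (π.color m) T) []

/-- The insertion tableau `P(π)` of a `k`-colored permutation. -/
def PTab (k n : ℕ) (π : ColoredPerm n k) : Tab k := PPartial k n π n

/-- The chain of shapes of the partial insertion tableaux of `π`. -/
def QChain (k n : ℕ) (π : ColoredPerm n k) (i : ℕ) : Word k :=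
  Tab.shape (PPartial k n π i)

/-- The recording tableau `Q(π)`: it has the same shape as `P(π)`, and after the `i`-th
insertion the value `i` is placed in the `k` squares by which the shape grew at step `i`. -/
def QTab (k n : ℕ) (π : ColoredPerm n k) : Tab k := chainTab k (QChain k n π) n

end KRF
namespace KRF

/-- The content of the unit square in column `c+1` and row `r+1` (1-indexed) of the square
diagram of `π`: `some j` if it contains an `X^j` (i.e. `π` sends position `c+1` to value
`r+1`, colored `j`), and `none` otherwise. -/
def squareX (k n : ℕ) (π : ColoredPerm n k) (c r : ℕ) : Option ℕ :=
  if h : c < n ∧ r < n then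
    if (π.perm ⟨c, h.1⟩ : ℕ) = r then some (π.color ⟨c, h.1⟩) else none
  else none

/-- `g` is a labeling of the corners of the square diagram of `π` obeying Fomin's growth
rules: every corner on the left edge and the bottom edge is labeled by the empty word, and
whenever a unit square has corner labels `ν` (bottom-left), `μ₁` (top-left), `μ₂`
(bottom-right) and `λ` (top-right): (1) if `μ₁` covers `ν` and `μ₂ = ν` then `λ = μ₁`,
and symmetrically; (2) if both `μ₁` and `μ₂` cover `ν` then `λ = 2ν`; (3) if
`μ₁ = ν = μ₂` and the square contains an `X^j` then `λ = 1_j ν`; (4) if `μ₁ = ν = μ₂` and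
the square contains no `X` then `λ = ν`. -/
def GrowthSpec (k n : ℕ) (π : ColoredPerm n k) (g : ℕ → ℕ → Word k) : Prop :=
  (∀ r, r ≤ n → g 0 r = []) ∧ (∀ c, c ≤ n → g c 0 = []) ∧
  ∀ c r, c < n → r < n →
    (ZCovers k (g c r) (g c (r + 1)) → g (c + 1) r = g c r →
      g (c + 1) (r + 1) = g c (r + 1)) ∧
    (ZCovers k (g c r) (g (c + 1) r) → g c (r + 1) = g c r →
      g (c + 1) (r + 1) = g (c + 1) r) ∧
    (ZCovers k (g c r) (g c (r + 1)) → ZCovers k (g c r) (g (c + 1) r) →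
      g (c + 1) (r + 1) = Letter.two :: g c r) ∧
    (g c (r + 1) = g c r → g (c + 1) r = g c r → ∀ j, squareX k n π c r = some j →
      g (c + 1) (r + 1) = Letter.one j :: g c r) ∧
    (g c (r + 1) = g c r → g (c + 1) r = g c r → squareX k n π c r = none →
      g (c + 1) (r + 1) = g c r)

section Aux

variable {k n : ℕ}

lemma twos_shift {p : Word k} (hp : ∀ l ∈ p, l = Letter.two) (s : Word k) :
    p ++ Letter.two :: s = Letter.two :: (p ++ s) := by
  induction p with
  | nil => rfl
  | cons a p ih =>
    have ha : a = Letter.two := hp a List.mem_cons_self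
    have ih' := ih (fun l hl => hp l (List.mem_cons_of_mem a hl))
    subst ha
    simp only [List.cons_append, ih']

lemma zcovers_rank {z w : Word k} (h : ZCovers k z w) :
    Word.rank w = Word.rank z + 1 := by
  rcases h with ⟨p, s, j, _, _, _, hw, hz⟩ | ⟨p, s, j, _, _, _, hw, hz⟩ <;>
    subst hw <;> subst hz <;>
    simp [Word.rank, Letter.rank] <;> omega

lemma zcovers_ne {z w : Word k} (h : ZCovers k z w) : w ≠ z := by
  intro e
  have := zcovers_rank h
  rw [e] at this
  omega

lemma zcovers_two_cons {ν μ : Word k} (h : ZCovers k ν μ) :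
    ZCovers k μ (Letter.two :: ν) := by
  rcases h with ⟨p, s, j, hp, h1, h2, hw, hz⟩ | ⟨p, s, j, hp, h1, h2, hw, hz⟩
  · refine Or.inr ⟨Letter.two :: p, s, j, ?_, h1, h2, ?_, ?_⟩
    · intro l hl
      rcases List.mem_cons.mp hl with h | h
      · exact h
      · exact hp l h
    · rw [hz]; rfl
    · rw [hw, twos_shift hp]; rfl
  · refine Or.inl ⟨p, s, j, hp, h1, h2, ?_, ?_⟩
    · rw [hz, twos_shift hp]
    · exact hw

lemma zcovers_one_cons {j : ℕ} (h1 : 1 ≤ j) (h2 : j ≤ k) (ν : Word k) :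
    ZCovers k ν (Letter.one j :: ν) :=
  Or.inr ⟨[], ν, j, by simp, h1, h2, rfl, rfl⟩

lemma valid_two_cons {ν : Word k} (hν : Word.Valid k ν) :
    Word.Valid k (Letter.two :: ν) := by
  intro l hl
  rcases List.mem_cons.mp hl with h | h
  · rw [h]; trivial
  · exact hν l h

lemma valid_one_cons {ν : Word k} {j : ℕ} (h1 : 1 ≤ j) (h2 : j ≤ k)
    (hν : Word.Valid k ν) : Word.Valid k (Letter.one j :: ν) := by
  intro l hl
  rcases List.mem_cons.mp hl with h | h
  · rw [h]; exact ⟨h1, h2⟩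
  · exact hν l h

/-- The local growth rule. -/
def localRule (k : ℕ) (ν μ₁ μ₂ : Word k) (x : Option ℕ) : Word k :=
  if μ₁ = ν ∧ μ₂ = ν then (match x with | some j => Letter.one j :: ν | none => ν)
  else if μ₂ = ν then μ₁
  else if μ₁ = ν then μ₂
  else Letter.two :: ν

def nextCol (k : ℕ) (f : ℕ → Word k) (x : ℕ → Option ℕ) : ℕ → Word k
  | 0 => []
  | r + 1 => localRule k (f r) (f (r + 1)) (nextCol k f x r) (x r)

def gfun (k n : ℕ) (π : ColoredPerm n k) : ℕ → ℕ → Word k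
  | 0 => fun _ => []
  | c + 1 => nextCol k (gfun k n π c) (squareX k n π c)

variable {π : ColoredPerm n k}

lemma gfun_zero_left (r : ℕ) : gfun k n π 0 r = [] := rfl

lemma gfun_zero (c : ℕ) : gfun k n π c 0 = [] := by cases c <;> rfl

lemma gfun_succ (c r : ℕ) :
    gfun k n π (c + 1) (r + 1) =
      localRule k (gfun k n π c r) (gfun k n π c (r + 1)) (gfun k n π (c + 1) r)
        (squareX k n π c r) := rfl

def RowUsed (k n : ℕ) (π : ColoredPerm n k) (c r : ℕ) : Prop :=
  ∃ c' < c, squareX k n π c' r ≠ none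

def ColUsed (k n : ℕ) (π : ColoredPerm n k) (c r : ℕ) : Prop :=
  ∃ r' < r, squareX k n π c r' ≠ none

lemma rowUsed_succ (c r : ℕ) :
    RowUsed k n π (c + 1) r ↔ RowUsed k n π c r ∨ squareX k n π c r ≠ none := by
  constructor
  · rintro ⟨c', hc', h⟩
    rcases Nat.lt_succ_iff_lt_or_eq.mp hc' with h' | h'
    · exact Or.inl ⟨c', h', h⟩
    · subst h'; exact Or.inr h
  · rintro (⟨c', hc', h⟩ | h)
    · exact ⟨c', Nat.lt_succ_of_lt hc', h⟩
    · exact ⟨c, Nat.lt_succ_self c, h⟩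

lemma colUsed_succ (c r : ℕ) :
    ColUsed k n π c (r + 1) ↔ ColUsed k n π c r ∨ squareX k n π c r ≠ none := by
  constructor
  · rintro ⟨r', hr', h⟩
    rcases Nat.lt_succ_iff_lt_or_eq.mp hr' with h' | h'
    · exact Or.inl ⟨r', h', h⟩
    · subst h'; exact Or.inr h
  · rintro (⟨r', hr', h⟩ | h)
    · exact ⟨r', Nat.lt_succ_of_lt hr', h⟩
    · exact ⟨r, Nat.lt_succ_self r, h⟩

lemma squareX_eq_some {c r j : ℕ} (h : squareX k n π c r = some j) :
    ∃ (hc : c < n), r < n ∧ (π.perm ⟨c, hc⟩ : ℕ) = r ∧ j = π.color ⟨c, hc⟩ := by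
  unfold squareX at h
  split at h
  · rename_i hcr
    split at h
    · rename_i hp
      exact ⟨hcr.1, hcr.2, hp, (Option.some_inj.mp h).symm⟩
    · exact absurd h (by simp)
  · exact absurd h (by simp)

lemma squareX_props {c r j : ℕ} (h : squareX k n π c r = some j) :
    (1 ≤ j ∧ j ≤ k) ∧ ¬RowUsed k n π c r ∧ ¬ColUsed k n π c r := by
  obtain ⟨hc, hr, hperm, hj⟩ := squareX_eq_some h
  refine ⟨⟨hj ▸ π.color_pos _, hj ▸ π.color_le _⟩, ?_, ?_⟩
  · rintro ⟨c', hc', hne⟩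
    obtain ⟨j', hj'⟩ := Option.ne_none_iff_exists'.mp hne
    obtain ⟨hc'2, _, hperm', _⟩ := squareX_eq_some hj'
    have : (⟨c', hc'2⟩ : Fin n) = ⟨c, hc⟩ := by
      apply π.perm.injective
      apply Fin.ext
      rw [hperm, hperm']
    have : c' = c := congrArg Fin.val this
    omega
  · rintro ⟨r', hr', hne⟩
    obtain ⟨j', hj'⟩ := Option.ne_none_iff_exists'.mp hne
    obtain ⟨hc2, _, hperm', _⟩ := squareX_eq_some hj'
    have : r' = r := by
      rw [← hperm', ← hperm]
    omega

lemma rowUsed_of_lt {c r : ℕ} (hr : r < n) (hc : n ≤ c) : RowUsed k n π c r := by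
  refine ⟨(π.perm.symm ⟨r, hr⟩ : Fin n), lt_of_lt_of_le (Fin.is_lt _) hc, ?_⟩
  unfold squareX
  have h1 : ((π.perm.symm ⟨r, hr⟩ : Fin n) : ℕ) < n ∧ r < n := ⟨Fin.is_lt _, hr⟩
  rw [dif_pos h1]
  have : (⟨((π.perm.symm ⟨r, hr⟩ : Fin n) : ℕ), h1.1⟩ : Fin n) = π.perm.symm ⟨r, hr⟩ :=
    Fin.eta _ _
  rw [this]
  simp

lemma colUsed_of_lt {c r : ℕ} (hc : c < n) (hr : n ≤ r) : ColUsed k n π c r := by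
  refine ⟨(π.perm ⟨c, hc⟩ : ℕ), lt_of_lt_of_le (Fin.is_lt _) hr, ?_⟩
  unfold squareX
  have h1 : c < n ∧ ((π.perm ⟨c, hc⟩ : Fin n) : ℕ) < n := ⟨hc, Fin.is_lt _⟩
  rw [dif_pos h1]
  simp

lemma squareLemma (ν μ₁ μ₂ : Word k) (x : Option ℕ) (R C : Prop)
    (hν : Word.Valid k ν) (hμ₁ : Word.Valid k μ₁) (hμ₂ : Word.Valid k μ₂)
    (h1e : ¬R → μ₁ = ν) (h1c : R → ZCovers k ν μ₁)
    (h2e : ¬C → μ₂ = ν) (h2c : C → ZCovers k ν μ₂)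
    (hx : ∀ j, x = some j → (1 ≤ j ∧ j ≤ k) ∧ ¬R ∧ ¬C) :
    Word.Valid k (localRule k ν μ₁ μ₂ x) ∧
    (¬(C ∨ x ≠ none) → localRule k ν μ₁ μ₂ x = μ₁) ∧
    ((C ∨ x ≠ none) → ZCovers k μ₁ (localRule k ν μ₁ μ₂ x)) ∧
    (¬(R ∨ x ≠ none) → localRule k ν μ₁ μ₂ x = μ₂) ∧
    ((R ∨ x ≠ none) → ZCovers k μ₂ (localRule k ν μ₁ μ₂ x)) := by
  by_cases hR : R <;> by_cases hC : C
  · -- both cover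
    have c1 := h1c hR
    have c2 := h2c hC
    have n1 : μ₁ ≠ ν := zcovers_ne c1
    have n2 : μ₂ ≠ ν := zcovers_ne c2
    have hlam : localRule k ν μ₁ μ₂ x = Letter.two :: ν := by
      unfold localRule
      rw [if_neg (by tauto), if_neg n2, if_neg n1]
    rw [hlam]
    exact ⟨valid_two_cons hν,
      fun h => absurd (Or.inl hC) h,
      fun _ => zcovers_two_cons c1,
      fun h => absurd (Or.inl hR) h,
      fun _ => zcovers_two_cons c2⟩
  · -- R only
    have c1 := h1c hR
    have n1 : μ₁ ≠ ν := zcovers_ne c1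
    have e2 := h2e hC
    have hxn : x = none := by
      cases x with
      | none => rfl
      | some j => exact absurd hR (hx j rfl).2.1
    have hlam : localRule k ν μ₁ μ₂ x = μ₁ := by
      unfold localRule
      rw [if_neg (by tauto), if_pos e2]
    rw [hlam]
    refine ⟨hμ₁, fun _ => rfl, ?_, ?_, ?_⟩
    · rintro (h | h)
      · exact absurd h hC
      · exact absurd hxn h
    · rintro h
      exact absurd (Or.inl hR) h
    · intro _
      rw [e2]
      exact c1
  · -- C only
    have c2 := h2c hC
    have n2 : μ₂ ≠ ν := zcovers_ne c2
    have e1 := h1e hR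
    have hxn : x = none := by
      cases x with
      | none => rfl
      | some j => exact absurd hC (hx j rfl).2.2
    have hlam : localRule k ν μ₁ μ₂ x = μ₂ := by
      unfold localRule
      rw [if_neg (by tauto), if_neg n2, if_pos e1]
    rw [hlam]
    refine ⟨hμ₂, ?_, ?_, ?_, ?_⟩
    · rintro h
      exact absurd (Or.inl hC) h
    · intro _
      rw [e1]
      exact c2
    · intro _; rfl
    · rintro (h | h)
      · exact absurd h hR
      · exact absurd hxn h
  · -- neither
    have e1 := h1e hR
    have e2 := h2e hC
    cases hxv : x with
    | none =>
      have hlam : localRule k ν μ₁ μ₂ none = ν := by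
        unfold localRule
        rw [if_pos ⟨e1, e2⟩]
      rw [hlam]
      refine ⟨hν, fun _ => e1.symm, ?_, fun _ => e2.symm, ?_⟩
      · rintro (h | h)
        · exact absurd h hC
        · exact absurd rfl h
      · rintro (h | h)
        · exact absurd h hR
        · exact absurd rfl h
    | some j =>
      obtain ⟨⟨hj1, hj2⟩, _, _⟩ := hx j hxv
      have hlam : localRule k ν μ₁ μ₂ (some j) = Letter.one j :: ν := by
        unfold localRule
        rw [if_pos ⟨e1, e2⟩]
      rw [hlam]
      refine ⟨valid_one_cons hj1 hj2 hν, ?_, ?_, ?_, ?_⟩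
      · intro h
        exact absurd (Or.inr (by simp)) h
      · intro _
        rw [e1]
        exact zcovers_one_cons hj1 hj2 ν
      · intro h
        exact absurd (Or.inr (by simp)) h
      · intro _
        rw [e2]
        exact zcovers_one_cons hj1 hj2 ν

end Aux
section Main

variable {k n : ℕ} {π : ColoredPerm n k}

lemma valid_nil : Word.Valid k ([] : Word k) :=
  fun l hl => absurd hl List.not_mem_nil

/-- One column step of the growth: from the invariants of column `c` derive the
invariants of column `c + 1` and of the horizontal edges between them. -/
lemma colstep {c : ℕ} (hVal : ∀ r, Word.Valid k (gfun k n π c r))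
    (hV : ∀ r, (¬RowUsed k n π c r → gfun k n π c (r + 1) = gfun k n π c r) ∧
      (RowUsed k n π c r → ZCovers k (gfun k n π c r) (gfun k n π c (r + 1)))) :
    (∀ r, Word.Valid k (gfun k n π (c + 1) r) ∧
      (¬ColUsed k n π c r → gfun k n π (c + 1) r = gfun k n π c r) ∧
      (ColUsed k n π c r → ZCovers k (gfun k n π c r) (gfun k n π (c + 1) r))) ∧
    (∀ r, (¬RowUsed k n π (c + 1) r → gfun k n π (c + 1) (r + 1) = gfun k n π (c + 1) r) ∧
      (RowUsed k n π (c + 1) r →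
        ZCovers k (gfun k n π (c + 1) r) (gfun k n π (c + 1) (r + 1)))) := by
  have mkSQ : ∀ r, Word.Valid k (gfun k n π (c + 1) r) →
      (¬ColUsed k n π c r → gfun k n π (c + 1) r = gfun k n π c r) →
      (ColUsed k n π c r → ZCovers k (gfun k n π c r) (gfun k n π (c + 1) r)) →
      Word.Valid k (localRule k (gfun k n π c r) (gfun k n π c (r + 1))
        (gfun k n π (c + 1) r) (squareX k n π c r)) ∧
      (¬(ColUsed k n π c r ∨ squareX k n π c r ≠ none) →
        localRule k (gfun k n π c r) (gfun k n π c (r + 1)) (gfun k n π (c + 1) r)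
          (squareX k n π c r) = gfun k n π c (r + 1)) ∧
      ((ColUsed k n π c r ∨ squareX k n π c r ≠ none) →
        ZCovers k (gfun k n π c (r + 1)) (localRule k (gfun k n π c r)
          (gfun k n π c (r + 1)) (gfun k n π (c + 1) r) (squareX k n π c r))) ∧
      (¬(RowUsed k n π c r ∨ squareX k n π c r ≠ none) →
        localRule k (gfun k n π c r) (gfun k n π c (r + 1)) (gfun k n π (c + 1) r)
          (squareX k n π c r) = gfun k n π (c + 1) r) ∧
      ((RowUsed k n π c r ∨ squareX k n π c r ≠ none) →
        ZCovers k (gfun k n π (c + 1) r) (localRule k (gfun k n π c r)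
          (gfun k n π c (r + 1)) (gfun k n π (c + 1) r) (squareX k n π c r))) := by
    intro r hv he hc
    exact squareLemma (gfun k n π c r) (gfun k n π c (r + 1)) (gfun k n π (c + 1) r)
      (squareX k n π c r) (RowUsed k n π c r) (ColUsed k n π c r)
      (hVal r) (hVal (r + 1)) hv (hV r).1 (hV r).2 he hc
      (fun j hj => squareX_props hj)
  have key : ∀ r, Word.Valid k (gfun k n π (c + 1) r) ∧
      (¬ColUsed k n π c r → gfun k n π (c + 1) r = gfun k n π c r) ∧
      (ColUsed k n π c r → ZCovers k (gfun k n π c r) (gfun k n π (c + 1) r)) := by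
    intro r
    induction r with
    | zero =>
      refine ⟨by rw [gfun_zero]; exact valid_nil, fun _ => by rw [gfun_zero, gfun_zero], ?_⟩
      rintro ⟨r', hr', _⟩
      exact absurd hr' (Nat.not_lt_zero _)
    | succ r ih =>
      have SQ := mkSQ r ih.1 ih.2.1 ih.2.2
      refine ⟨?_, ?_, ?_⟩
      · rw [gfun_succ]; exact SQ.1
      · intro h
        rw [gfun_succ]
        exact SQ.2.1 (fun h' => h ((colUsed_succ c r).mpr h'))
      · intro h
        rw [gfun_succ]
        exact SQ.2.2.1 ((colUsed_succ c r).mp h)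
  refine ⟨key, fun r => ?_⟩
  have SQ := mkSQ r (key r).1 (key r).2.1 (key r).2.2
  constructor
  · intro h
    rw [gfun_succ]
    exact SQ.2.2.2.1 (fun h' => h ((rowUsed_succ c r).mpr h'))
  · intro h
    rw [gfun_succ]
    exact SQ.2.2.2.2 ((rowUsed_succ c r).mp h)

lemma gmaster (π : ColoredPerm n k) : ∀ c, (∀ r, Word.Valid k (gfun k n π c r)) ∧
    (∀ r, (¬RowUsed k n π c r → gfun k n π c (r + 1) = gfun k n π c r) ∧
      (RowUsed k n π c r → ZCovers k (gfun k n π c r) (gfun k n π c (r + 1)))) := by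
  intro c
  induction c with
  | zero =>
    refine ⟨fun r => valid_nil, fun r => ⟨fun _ => rfl, ?_⟩⟩
    rintro ⟨c', hc', _⟩
    exact absurd hc' (Nat.not_lt_zero _)
  | succ c ih =>
    exact ⟨fun r => ((colstep ih.1 ih.2).1 r).1, (colstep ih.1 ih.2).2⟩

lemma ghstat (π : ColoredPerm n k) (c r : ℕ) :
    (¬ColUsed k n π c r → gfun k n π (c + 1) r = gfun k n π c r) ∧
    (ColUsed k n π c r → ZCovers k (gfun k n π c r) (gfun k n π (c + 1) r)) :=
  ((colstep (gmaster π c).1 (gmaster π c).2).1 r).2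

lemma gfun_spec (π : ColoredPerm n k) : GrowthSpec k n π (gfun k n π) := by
  refine ⟨fun r _ => rfl, fun c _ => gfun_zero c, ?_⟩
  intro c r _ _
  refine ⟨?_, ?_, ?_, ?_, ?_⟩
  · intro hcov heq
    have n1 := zcovers_ne hcov
    rw [gfun_succ]
    unfold localRule
    rw [if_neg (fun h => n1 h.1), if_pos heq]
  · intro hcov heq
    have n2 := zcovers_ne hcov
    rw [gfun_succ]
    unfold localRule
    rw [if_neg (fun h => n2 h.2), if_neg n2, if_pos heq]
  · intro h1 h2
    have n1 := zcovers_ne h1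
    have n2 := zcovers_ne h2
    rw [gfun_succ]
    unfold localRule
    rw [if_neg (fun h => n1 h.1), if_neg n2, if_neg n1]
  · intro e1 e2 j hj
    rw [gfun_succ]
    unfold localRule
    rw [if_pos ⟨e1, e2⟩, hj]
  · intro e1 e2 hj
    rw [gfun_succ]
    unfold localRule
    rw [if_pos ⟨e1, e2⟩, hj]

lemma eq_gfun {g : ℕ → ℕ → Word k} (hg : GrowthSpec k n π g) :
    ∀ c, c ≤ n → ∀ r, r ≤ n → g c r = gfun k n π c r := by
  obtain ⟨hg0, hgc0, hgrule⟩ := hg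
  intro c
  induction c with
  | zero => intro _ r hr; rw [hg0 r hr, gfun_zero_left]
  | succ c ihc =>
    intro hc r
    induction r with
    | zero => intro _; rw [hgc0 (c + 1) hc, gfun_zero]
    | succ r ihr =>
      intro hr
      have hcn : c < n := Nat.lt_of_succ_le hc
      have hrn : r < n := Nat.lt_of_succ_le hr
      have hν := ihc (le_of_lt hcn) r (le_of_lt hrn)
      have hμ₁ := ihc (le_of_lt hcn) (r + 1) hr
      have hμ₂ := ihr (le_of_lt hrn)
      have hV := (gmaster π c).2 r
      have hH := ghstat π c r
      have rules := hgrule c r hcn hrn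
      by_cases R : RowUsed k n π c r <;> by_cases C : ColUsed k n π c r
      · have c1 := hV.2 R
        have c2 := hH.2 C
        have n1 := zcovers_ne c1
        have n2 := zcovers_ne c2
        have := rules.2.2.1 (by rw [hν, hμ₁]; exact c1) (by rw [hν, hμ₂]; exact c2)
        rw [this, hν, gfun_succ]
        unfold localRule
        rw [if_neg (fun h => n1 h.1), if_neg n2, if_neg n1]
      · have c1 := hV.2 R
        have e2 := hH.1 C
        have n1 := zcovers_ne c1
        have := rules.1 (by rw [hν, hμ₁]; exact c1) (by rw [hμ₂, hν]; exact e2)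
        rw [this, hμ₁, gfun_succ]
        unfold localRule
        rw [if_neg (fun h => n1 h.1), if_pos e2]
      · have e1 := hV.1 R
        have c2 := hH.2 C
        have n2 := zcovers_ne c2
        have := rules.2.1 (by rw [hν, hμ₂]; exact c2) (by rw [hμ₁, hν]; exact e1)
        rw [this, hμ₂, gfun_succ]
        unfold localRule
        rw [if_neg (fun h => n2 h.2), if_neg n2, if_pos e1]
      · have e1 := hV.1 R
        have e2 := hH.1 C
        cases hxv : squareX k n π c r with
        | none =>
          have := rules.2.2.2.2 (by rw [hμ₁, hν]; exact e1) (by rw [hμ₂, hν]; exact e2) hxv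
          rw [this, hν, gfun_succ]
          unfold localRule
          rw [if_pos ⟨e1, e2⟩, hxv]
        | some j =>
          have := rules.2.2.2.1 (by rw [hμ₁, hν]; exact e1) (by rw [hμ₂, hν]; exact e2) j hxv
          rw [this, hν, gfun_succ]
          unfold localRule
          rw [if_pos ⟨e1, e2⟩, hxv]

lemma rank_right (π : ColoredPerm n k) : ∀ r, r ≤ n → Word.rank (gfun k n π n r) = r := by
  intro r
  induction r with
  | zero => intro _; rw [gfun_zero]; rfl
  | succ r ih =>
    intro hr
    have hrn : r < n := hr
    have cov := ((gmaster π n).2 r).2 (rowUsed_of_lt hrn le_rfl)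
    rw [zcovers_rank cov, ih (le_of_lt hrn)]

end Main
/-- For every `k`-colored permutation `π` of length `n`, Fomin's
growth rules applied to the square diagram of `π` are well-defined and consistent: a
labeling obeying them exists and is unique (every corner receives a unique label in
`Z(k)`); along every horizontal or vertical edge of the array the two corner labels are
either equal or form a cover relation in `Z(k)`; and the sequences of labels read
bottom-to-top up the right edge and left-to-right along the top edge are both saturated
chains in `Z(k)` from the empty word to the same word of rank `n` (the label of the
top-right corner). -/
theorem growthSpec_wellDefined (k n : ℕ) (hk : 1 ≤ k) (π : ColoredPerm n k) :
    (∃ g, GrowthSpec k n π g) ∧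
    (∀ g g', GrowthSpec k n π g → GrowthSpec k n π g' →
      ∀ c ≤ n, ∀ r ≤ n, g c r = g' c r) ∧
    (∀ g, GrowthSpec k n π g →
      (∀ c ≤ n, ∀ r < n, g c (r + 1) = g c r ∨ ZCovers k (g c r) (g c (r + 1))) ∧
      (∀ c < n, ∀ r ≤ n, g (c + 1) r = g c r ∨ ZCovers k (g c r) (g (c + 1) r)) ∧
      (∀ c ≤ n, ∀ r ≤ n, Word.Valid k (g c r)) ∧
      (∀ r < n, ZCovers k (g n r) (g n (r + 1))) ∧
      (∀ c < n, ZCovers k (g c n) (g (c + 1) n)) ∧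
      g n 0 = [] ∧ g 0 n = [] ∧ Word.rank (g n n) = n) := by
  refine ⟨⟨gfun k n π, gfun_spec π⟩, ?_, ?_⟩
  · intro g g' hg hg' c hc r hr
    rw [eq_gfun hg c hc r hr, eq_gfun hg' c hc r hr]
  · intro g hg
    have E : ∀ c, c ≤ n → ∀ r, r ≤ n → g c r = gfun k n π c r := eq_gfun hg
    refine ⟨?_, ?_, ?_, ?_, ?_, ?_, ?_, ?_⟩
    · intro c hc r hr
      rw [E c hc r (le_of_lt hr), E c hc (r + 1) hr]
      rcases Classical.em (RowUsed k n π c r) with h | h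
      · exact Or.inr (((gmaster π c).2 r).2 h)
      · exact Or.inl (((gmaster π c).2 r).1 h)
    · intro c hc r hr
      rw [E c (le_of_lt hc) r hr, E (c + 1) hc r hr]
      rcases Classical.em (ColUsed k n π c r) with h | h
      · exact Or.inr ((ghstat π c r).2 h)
      · exact Or.inl ((ghstat π c r).1 h)
    · intro c hc r hr
      rw [E c hc r hr]
      exact (gmaster π c).1 r
    · intro r hr
      rw [E n le_rfl r (le_of_lt hr), E n le_rfl (r + 1) hr]
      exact ((gmaster π n).2 r).2 (rowUsed_of_lt hr le_rfl)
    · intro c hc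
      rw [E c (le_of_lt hc) n le_rfl, E (c + 1) hc n le_rfl]
      exact (ghstat π c n).2 (colUsed_of_lt hc le_rfl)
    · rw [E n le_rfl 0 (Nat.zero_le n)]; exact gfun_zero n
    · rw [E 0 (Nat.zero_le n) n le_rfl]; rfl
    · rw [E n le_rfl n le_rfl]; exact rank_right π n le_rfl

end KRF
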